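/- Let g : (0,∞)³ → (0,∞) be a function of (σ_B², V, C) satisfying for all positive arguments and all λ > 0: (shares scaling) g(λ²σ_B², V/λ, C) = g(σ_B², V, C); (money scaling) g(λ²σ_B², V, λC) = g(σ_B², V, C); (time scaling) g(λσ_B², λV, C) = λ·g(σ_B², V, C). Then there exists a constant c > 0 such that g(σ_B², V, C) = c · (σ_B²)^(1/3) · V^(2/3) · C^(−2/3) for all positive arguments; equivalently, the number of trades N = g(σ_B², V, C) satisfies N^(3/2) = c^(3/2) · √(σ_B²) · V / C. -/

import Mathlib

/-- Bachelier-volatility version of the 3/2-law: if the number of trades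
`N = g(σ_B², V, C)` is a dimensionally invariant positive function, then
`g(σ_B², V, C) = c · (σ_B²)^(1/3) · V^(2/3) · C^(−2/3)`; equivalently
`N^(3/2) = c^(3/2) · √(σ_B²) · V / C`. -/
theorem three_halves_law_Bachelier
    (g : ℝ → ℝ → ℝ → ℝ)
    (hpos : ∀ sB V C : ℝ, 0 < sB → 0 < V → 0 < C → 0 < g sB V C)
    (hshares : ∀ sB V C lam : ℝ, 0 < sB → 0 < V → 0 < C → 0 < lam →
      g (lam ^ 2 * sB) (V / lam) C = g sB V C)
    (hmoney : ∀ sB V C lam : ℝ, 0 < sB → 0 < V → 0 < C → 0 < lam →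
      g (lam ^ 2 * sB) V (lam * C) = g sB V C)
    (htime : ∀ sB V C lam : ℝ, 0 < sB → 0 < V → 0 < C → 0 < lam →
      g (lam * sB) (lam * V) C = lam * g sB V C) :
    ∃ c : ℝ, 0 < c ∧ ∀ sB V C : ℝ, 0 < sB → 0 < V → 0 < C →
      g sB V C = c * sB ^ ((1 : ℝ) / 3) * V ^ ((2 : ℝ) / 3) * C ^ (-(2 : ℝ) / 3)
      ∧ (g sB V C) ^ ((3 : ℝ) / 2)
          = c ^ ((3 : ℝ) / 2) * Real.sqrt sB * V / C := by
  set c := g 1 1 1 with hc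
  have hcpos : 0 < c := hpos 1 1 1 one_pos one_pos one_pos
  -- key reduction: g (t*(μ^2*C^2)) (t/μ) C = t * c
  have key : ∀ C t μ : ℝ, 0 < C → 0 < t → 0 < μ →
      g (t * (μ ^ 2 * C ^ 2)) (t / μ) C = t * c := by
    intro C t μ hC ht hμ
    have h1 : g (μ ^ 2 * C ^ 2) (1 / μ) C = g (C ^ 2) 1 C := by
      have := hshares (C ^ 2) 1 C μ (by positivity) one_pos hC hμ
      simpa using this
    have h2 : g (C ^ 2) 1 C = c := by
      have := hmoney 1 1 1 C one_pos one_pos one_pos hC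
      simpa using this
    have h3 := htime (μ ^ 2 * C ^ 2) (1 / μ) C t (by positivity) (by positivity) hC ht
    have : g (t * (μ ^ 2 * C ^ 2)) (t * (1 / μ)) C = t * c := by
      rw [h3, h1, h2]
    rw [mul_one_div] at this; exact this
  refine ⟨c, hcpos, ?_⟩
  intro sB V C hsB hV hC
  set μ : ℝ := (sB / (V * C ^ 2)) ^ ((1 : ℝ) / 3) with hμdef
  have hμ : 0 < μ := by positivity
  have hμ3 : μ ^ (3 : ℕ) = sB / (V * C ^ 2) := by
    rw [hμdef, ← Real.rpow_natCast (_ ^ _) 3, ← Real.rpow_mul (by positivity)]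
    norm_num
  have harg1 : (V * μ) * (μ ^ 2 * C ^ 2) = sB := by
    have : V * μ * (μ ^ 2 * C ^ 2) = μ ^ (3:ℕ) * (V * C ^ 2) := by ring
    rw [this, hμ3]
    field_simp
  have harg2 : (V * μ) / μ = V := by
    field_simp
  have hformula : g sB V C = V * μ * c := by
    have := key C (V * μ) μ hC (by positivity) hμ
    rw [harg1, harg2] at this
    exact this
  -- express V * μ in rpow form
  have hμval : μ = sB ^ ((1:ℝ)/3) * V ^ (-(1:ℝ)/3) * C ^ (-(2:ℝ)/3) := by
    rw [hμdef, Real.div_rpow hsB.le (by positivity),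
      Real.mul_rpow hV.le (by positivity),
      ← Real.rpow_natCast C 2, ← Real.rpow_mul hC.le]
    rw [div_eq_mul_inv, mul_inv, ← Real.rpow_neg hV.le, ← Real.rpow_neg hC.le]
    norm_num
    ring
  have hVμ : V * μ = sB ^ ((1:ℝ)/3) * V ^ ((2:ℝ)/3) * C ^ (-(2:ℝ)/3) := by
    rw [hμval]
    have : V * (sB ^ ((1:ℝ)/3) * V ^ (-(1:ℝ)/3) * C ^ (-(2:ℝ)/3))
        = sB ^ ((1:ℝ)/3) * (V ^ (1:ℝ) * V ^ (-(1:ℝ)/3)) * C ^ (-(2:ℝ)/3) := by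
      rw [Real.rpow_one]; ring
    rw [this, ← Real.rpow_add hV]
    norm_num
  have hmain : g sB V C = c * sB ^ ((1:ℝ)/3) * V ^ ((2:ℝ)/3) * C ^ (-(2:ℝ)/3) := by
    rw [hformula, hVμ]; ring
  refine ⟨hmain, ?_⟩
  rw [hmain]
  rw [Real.mul_rpow (by positivity) (by positivity),
    Real.mul_rpow (by positivity) (by positivity),
    Real.mul_rpow (by positivity) (by positivity),
    ← Real.rpow_mul hsB.le, ← Real.rpow_mul hV.le, ← Real.rpow_mul hC.le]
  norm_num
  rw [← Real.sqrt_eq_rpow, Real.rpow_neg_one]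
  ring
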